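/- Let A ⊆ ℝ^d be a discrete set, let N ∈ ℕ, and set P_i = #(A ∩ Q(iN,N)) for i ∈ ℤ^d. Suppose there exist integers t_{i,j} for pairs i,j ∈ ℤ^d with ‖i−j‖_∞ = 1 satisfying: N^d = P_i − Σ_{j:‖i−j‖_∞=1} t_{i,j}, t_{i,j} = −t_{j,i}, and Σ_{j:‖i−j‖_∞=1} |t_{i,j}| ≤ min{P_i, N^d} for all i. Then there exists a bijection σ : A → ℤ^d with sup_{a∈A} ‖a − σ(a)‖_∞ ≤ 3N. -/

import Mathlib

open Set

/-- The half-open cube `Q(b,r)` in `ℝ^d`. -/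
def Qc {d : ℕ} (b : Fin d → ℝ) (r : ℝ) : Set (Fin d → ℝ) :=
  {y | ∀ j, b j ≤ y j ∧ y j < b j + r}

/-- `A` is discrete: its intersection with any ball is finite. -/
def IsDiscreteSet {d : ℕ} (A : Set (Fin d → ℝ)) : Prop :=
  ∀ (x : Fin d → ℝ) (r : ℝ), (A ∩ Metric.ball x r).Finite

/-- `A` is roughly shift-invariant with constant `L` (sup norm). -/
def RSI {d : ℕ} (A : Set (Fin d → ℝ)) (L : ℝ) : Prop :=
  ∀ x : Fin d → ℝ, ∃ σ : A ≃ A, ∀ a : A, ‖(a : Fin d → ℝ) + x - (σ a : Fin d → ℝ)‖ < L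

/-- The neighbors of `i ∈ ℤ^d` in the sup norm: all `j ≠ i` with `‖i-j‖_∞ = 1`. -/
def nbrs {d : ℕ} (i : Fin d → ℤ) : Finset (Fin d → ℤ) :=
  (Fintype.piFinset (fun k => ({i k - 1, i k, i k + 1} : Finset ℤ))).erase i

lemma floor_div_eq_iff {N : ℕ} (hN : 0 < N) (a : ℝ) (c : ℤ) :
    ⌊a / (N : ℝ)⌋ = c ↔ (c : ℝ) * N ≤ a ∧ a < c * N + N := by
  have hN' : (0:ℝ) < N := by exact_mod_cast hN
  rw [Int.floor_eq_iff, le_div_iff₀ hN', div_lt_iff₀ hN']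
  constructor <;> rintro ⟨h1, h2⟩ <;> constructor <;> nlinarith

lemma floor_intdiv_eq_iff {N : ℕ} (hN : 0 < N) (x c : ℤ) :
    ⌊(x : ℝ) / (N : ℝ)⌋ = c ↔ c * N ≤ x ∧ x < c * N + N := by
  rw [floor_div_eq_iff hN]
  constructor <;> intro h <;>
    exact ⟨by exact_mod_cast h.1, by exact_mod_cast h.2⟩

lemma nbrs_symm {d : ℕ} {i j : Fin d → ℤ} (h : j ∈ nbrs i) : i ∈ nbrs j := by
  simp only [nbrs, Finset.mem_erase, Fintype.mem_piFinset, Finset.mem_insert,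
    Finset.mem_singleton] at h ⊢
  obtain ⟨hne, h⟩ := h
  exact ⟨fun he => hne he.symm, fun k => by have := h k; omega⟩

lemma mem_Qc_iff {d N : ℕ} (hN : 0 < N) (i : Fin d → ℤ) (a : Fin d → ℝ) :
    a ∈ Qc (fun k => (N : ℝ) * i k) (N : ℝ) ↔ ∀ k, ⌊a k / (N : ℝ)⌋ = i k := by
  unfold Qc
  simp only [Set.mem_setOf_eq]
  refine forall_congr' fun k => ?_
  rw [floor_div_eq_iff hN]
  constructor <;> rintro ⟨h1, h2⟩ <;>
    exact ⟨by linarith [mul_comm (N:ℝ) (i k : ℝ)], by linarith [mul_comm (N:ℝ) (i k : ℝ)]⟩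

lemma Qc_finite {d : ℕ} {A : Set (Fin d → ℝ)} (hdisc : IsDiscreteSet A)
    (b : Fin d → ℝ) (r : ℝ) : (A ∩ Qc b r).Finite := by
  apply Set.Finite.subset (hdisc b (|r| + 1))
  rintro y ⟨hy, hq⟩
  refine ⟨hy, ?_⟩
  rw [Metric.mem_ball]
  have hr : (0:ℝ) < |r| + 1 := by positivity
  rw [dist_pi_lt_iff hr]
  intro k
  have := hq k
  rw [Real.dist_eq, abs_lt]
  constructor <;> [skip; skip] <;>
    [linarith [le_abs_self r, abs_nonneg r]; linarith [le_abs_self r, abs_nonneg r]]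

theorem stmt11 {d : ℕ} (A : Set (Fin d → ℝ)) (hdisc : IsDiscreteSet A)
    (N : ℕ) (hN : 0 < N)
    (t : (Fin d → ℤ) → (Fin d → ℤ) → ℤ)
    (ht1 : ∀ i : Fin d → ℤ,
      ((N : ℤ) ^ d) = ((A ∩ Qc (fun k => (N : ℝ) * i k) N).ncard : ℤ) - ∑ j ∈ nbrs i, t i j)
    (ht2 : ∀ i : Fin d → ℤ, ∀ j ∈ nbrs i, t i j = - t j i)
    (ht3 : ∀ i : Fin d → ℤ,
      ∑ j ∈ nbrs i, |t i j| ≤ min ((A ∩ Qc (fun k => (N : ℝ) * i k) N).ncard : ℤ) ((N : ℤ) ^ d)) :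
    ∃ σ : A ≃ (Fin d → ℤ),
      ∀ a : A, ‖(a : Fin d → ℝ) - (fun k => ((σ a k : ℤ) : ℝ))‖ ≤ 3 * N := by
  classical
  -- notation
  let P : (Fin d → ℤ) → ℕ := fun i => (A ∩ Qc (fun k => (N : ℝ) * i k) N).ncard
  let s : (Fin d → ℤ) → (Fin d → ℤ) → ℕ := fun i j => (t i j).toNat
  let Sout : (Fin d → ℤ) → ℕ := fun i => ∑ j ∈ nbrs i, s i j
  let Sin : (Fin d → ℤ) → ℕ := fun i => ∑ j ∈ nbrs i, s j i
  have habs : ∀ m : ℤ, (m.toNat : ℤ) ≤ |m| := by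
    intro m; rw [Int.abs_eq_natAbs]; omega
  have hout : ∀ i, Sout i ≤ P i := by
    intro i
    have h1 : ((Sout i : ℕ) : ℤ) ≤ ∑ j ∈ nbrs i, |t i j| := by
      show ((∑ j ∈ nbrs i, s i j : ℕ) : ℤ) ≤ _
      push_cast
      exact Finset.sum_le_sum fun j _ => habs _
    have h2 := (ht3 i).trans (min_le_left _ _)
    have := h1.trans h2
    show Sout i ≤ (A ∩ Qc (fun k => (N : ℝ) * i k) N).ncard
    exact_mod_cast this
  have hkey : ∀ i, (P i - Sout i) + Sin i = N ^ d := by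
    intro i
    have h2 : ∑ j ∈ nbrs i, t i j = (Sout i : ℤ) - (Sin i : ℤ) := by
      have hterm : ∀ j ∈ nbrs i, t i j = ((s i j : ℤ) - (s j i : ℤ)) := by
        intro j hj
        have h := ht2 i j hj
        show t i j = ((t i j).toNat : ℤ) - ((t j i).toNat : ℤ)
        omega
      rw [Finset.sum_congr rfl hterm, Finset.sum_sub_distrib]
      show _ = ((∑ j ∈ nbrs i, s i j : ℕ) : ℤ) - ((∑ j ∈ nbrs i, s j i : ℕ) : ℤ)
      push_cast
      ring
    have h3 : (N:ℤ)^d = (P i : ℤ) - ((Sout i : ℤ) - Sin i) := by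
      rw [ht1 i, h2]
    have h4 := hout i
    zify [h4]
    push_cast
    linarith [h3]
  -- the cube-index maps
  let Ia : A → (Fin d → ℤ) := fun a => fun k => ⌊(a : Fin d → ℝ) k / (N : ℝ)⌋
  let Jz : (Fin d → ℤ) → (Fin d → ℤ) := fun m => fun k => ⌊(m k : ℝ) / (N : ℝ)⌋
  have hmemQ : ∀ (i : Fin d → ℤ) (a : A),
      Ia a = i ↔ (a : Fin d → ℝ) ∈ Qc (fun k => (N : ℝ) * i k) N := by
    intro i a
    rw [mem_Qc_iff hN]
    constructor
    · intro h k; exact congrFun h k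
    · intro h; funext k; exact h k
  -- fiber over i of Ia matches the cube intersection
  let eA : ∀ i : Fin d → ℤ,
      {a : A // Ia a = i} ≃ ↥(A ∩ Qc (fun k => (N : ℝ) * i k) N) := fun i =>
    { toFun := fun a => ⟨a.1.1, a.1.2, (hmemQ i a.1).mp a.2⟩
      invFun := fun x => ⟨⟨x.1, x.2.1⟩, (hmemQ i ⟨x.1, x.2.1⟩).mpr x.2.2⟩
      left_inv := fun _ => rfl
      right_inv := fun _ => rfl }
  -- fiber over i of Jz is a box of lattice points
  have hJz : ∀ (i m : Fin d → ℤ), Jz m = i ↔ ∀ k, i k * N ≤ m k ∧ m k < i k * N + N := by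
    intro i m
    rw [funext_iff]
    exact forall_congr' fun k => floor_intdiv_eq_iff hN _ _
  let eZ : ∀ i : Fin d → ℤ, {m : Fin d → ℤ // Jz m = i} ≃ (Fin d → Fin N) := fun i =>
    { toFun := fun m k => ⟨(m.1 k - i k * N).toNat, by
        have h := (hJz i m.1).mp m.2 k; omega⟩
      invFun := fun v => ⟨fun k => i k * N + (v k : ℤ), by
        rw [hJz]
        intro k
        have h2 : (((v k : ℕ) : ℤ)) < (N : ℤ) := by exact_mod_cast (v k).2
        constructor <;> omega⟩
      left_inv := fun m => by
        apply Subtype.ext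
        funext k
        have h := (hJz i m.1).mp m.2 k
        show i k * N + ((m.1 k - i k * N).toNat : ℤ) = m.1 k
        omega
      right_inv := fun v => by
        funext k
        apply Fin.ext
        show (i k * N + (v k : ℤ) - i k * N).toNat = (v k : ℕ)
        omega }
  -- the local target types
  let T : (Fin d → ℤ) → Type _ := fun i =>
    Fin (P i - Sout i) ⊕ Σ j : ↥(nbrs i), Fin (s i ↑j)
  let U : (Fin d → ℤ) → Type _ := fun i =>
    Fin (P i - Sout i) ⊕ Σ j : ↥(nbrs i), Fin (s ↑j i)
  have cardT : ∀ i, Fintype.card (T i) = P i := by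
    intro i
    have h1 : Fintype.card (T i) = (P i - Sout i) + Sout i := by
      show Fintype.card (Fin (P i - Sout i) ⊕ Σ j : ↥(nbrs i), Fin (s i ↑j)) = _
      rw [Fintype.card_sum, Fintype.card_sigma]
      simp only [Fintype.card_fin]
      rw [Finset.sum_coe_sort (nbrs i) (s i)]
    have h2 := hout i
    omega
  have cardU : ∀ i, Fintype.card (U i) = N ^ d := by
    intro i
    have h1 : Fintype.card (U i) = (P i - Sout i) + Sin i := by
      show Fintype.card (Fin (P i - Sout i) ⊕ Σ j : ↥(nbrs i), Fin (s ↑j i)) = _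
      rw [Fintype.card_sum, Fintype.card_sigma]
      simp only [Fintype.card_fin]
      rw [Finset.sum_coe_sort (nbrs i) (fun j => s j i)]
    rw [h1, hkey i]
  -- local equivalences
  let equivT : ∀ i : Fin d → ℤ, {a : A // Ia a = i} ≃ T i := fun i => by
    letI : Fintype ↥(A ∩ Qc (fun k => (N : ℝ) * i k) N) := (Qc_finite hdisc _ _).fintype
    refine (eA i).trans (Fintype.equivOfCardEq ?_)
    rw [cardT i, ← Nat.card_eq_fintype_card, Nat.card_coe_set_eq]
  let equivU : ∀ i : Fin d → ℤ, U i ≃ {m : Fin d → ℤ // Jz m = i} := fun i => by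
    refine (Fintype.equivOfCardEq ?_).trans (eZ i).symm
    rw [cardU i]
    simp [Fintype.card_pi]
  -- the transfer equivalence
  let M : (Σ i, T i) ≃ (Σ i, U i) :=
    { toFun := fun p => match p with
        | ⟨i, Sum.inl x⟩ => ⟨i, Sum.inl x⟩
        | ⟨i, Sum.inr ⟨j, x⟩⟩ => ⟨↑j, Sum.inr ⟨⟨i, nbrs_symm j.2⟩, x⟩⟩
      invFun := fun p => match p with
        | ⟨i, Sum.inl x⟩ => ⟨i, Sum.inl x⟩
        | ⟨i, Sum.inr ⟨j, x⟩⟩ => ⟨↑j, Sum.inr ⟨⟨i, nbrs_symm j.2⟩, x⟩⟩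
      left_inv := fun p => by rcases p with ⟨i, x | ⟨⟨j, hj⟩, x⟩⟩ <;> rfl
      right_inv := fun p => by rcases p with ⟨i, x | ⟨⟨j, hj⟩, x⟩⟩ <;> rfl }
  have hM : ∀ q : Σ i, T i, (M q).1 = q.1 ∨ (M q).1 ∈ nbrs q.1 := by
    rintro ⟨i, x | ⟨j, x⟩⟩
    · left; rfl
    · right; exact j.2
  -- assemble
  let EA : ↥A ≃ Σ i, {a : A // Ia a = i} := (Equiv.sigmaFiberEquiv Ia).symm
  let EZ : (Σ i, {m : Fin d → ℤ // Jz m = i}) ≃ (Fin d → ℤ) := Equiv.sigmaFiberEquiv Jz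
  let σ : ↥A ≃ (Fin d → ℤ) :=
    EA.trans ((Equiv.sigmaCongrRight equivT).trans
      (M.trans ((Equiv.sigmaCongrRight equivU).trans EZ)))
  have htrack : ∀ a : A, Jz (σ a) = Ia a ∨ Jz (σ a) ∈ nbrs (Ia a) := by
    intro a
    have hp1 : ((Equiv.sigmaCongrRight equivT) (EA a)).1 = Ia a := rfl
    have h4 : Jz (σ a) = (M ((Equiv.sigmaCongrRight equivT) (EA a))).1 := by
      exact ((Equiv.sigmaCongrRight equivU)
        (M ((Equiv.sigmaCongrRight equivT) (EA a)))).2.2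
    rw [h4, ← hp1]
    exact hM _
  refine ⟨σ, ?_⟩
  intro a
  rw [pi_norm_le_iff_of_nonneg (by positivity)]
  intro k
  have hia : ((Ia a) k : ℝ) * N ≤ (a : Fin d → ℝ) k ∧
      (a : Fin d → ℝ) k < (Ia a) k * N + N :=
    (floor_div_eq_iff hN _ _).mp rfl
  have him : (Jz (σ a)) k * N ≤ (σ a) k ∧ (σ a) k < (Jz (σ a)) k * N + N :=
    (floor_intdiv_eq_iff hN _ _).mp rfl
  have hnb : -1 ≤ (Jz (σ a)) k - (Ia a) k ∧ (Jz (σ a)) k - (Ia a) k ≤ 1 := by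
    rcases htrack a with h | h
    · rw [h]; omega
    · simp only [nbrs, Finset.mem_erase, Fintype.mem_piFinset, Finset.mem_insert,
        Finset.mem_singleton] at h
      have := h.2 k
      omega
  have hNR : (0:ℝ) ≤ N := by positivity
  have himR : ((Jz (σ a)) k : ℝ) * N ≤ ((σ a) k : ℝ) ∧
      ((σ a) k : ℝ) < ((Jz (σ a)) k : ℝ) * N + N :=
    ⟨by exact_mod_cast him.1, by exact_mod_cast him.2⟩
  have hnbR : (-1:ℝ) ≤ ((Jz (σ a)) k : ℝ) - ((Ia a) k : ℝ) ∧
      ((Jz (σ a)) k : ℝ) - ((Ia a) k : ℝ) ≤ 1 := by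
    constructor <;> [exact_mod_cast hnb.1; exact_mod_cast hnb.2]
  show ‖((a : Fin d → ℝ) - fun k => (((σ a) k : ℤ) : ℝ)) k‖ ≤ 3 * N
  rw [Pi.sub_apply, Real.norm_eq_abs, abs_le]
  constructor
  · nlinarith [hia.1, himR.2, hnbR.2]
  · nlinarith [hia.2, himR.1, hnbR.1]
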